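/- If (U, R, 𝓕) is a bc-approximation space, then (𝔠(U, R, 𝓕), ⊆) is a bc-domain. -/

import Mathlib

open Set

/-- The upper approximation operator: `upp R A = {x | ∃ y ∈ A, x R y}`. -/
def upp {U : Type*} (R : U → U → Prop) (A : Set U) : Set U := {x | ∃ y ∈ A, R x y}

/-- `(U, R, 𝓕)` is a CF-approximation space. -/
def IsCFApprox {U : Type*} (R : U → U → Prop) (𝓕 : Set (Set U)) : Prop :=
  Transitive R ∧ 𝓕.Nonempty ∧ (∀ F ∈ 𝓕, F.Finite) ∧
    ∀ F ∈ 𝓕, ∀ K : Set U, K.Finite → K ⊆ upp R F →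
      ∃ G ∈ 𝓕, K ⊆ upp R G ∧ G ⊆ upp R F

/-- `E` is a CF-closed set of `(U, R, 𝓕)`. -/
def CFClosed {U : Type*} (R : U → U → Prop) (𝓕 : Set (Set U)) (E : Set U) : Prop :=
  ∀ K : Set U, K.Finite → K ⊆ E →
    ∃ F ∈ 𝓕, K ⊆ upp R F ∧ upp R F ⊆ E ∧ F ⊆ E

/-- The join saturation `𝓕^♯`: all unions of nonempty finite subfamilies of `𝓕`. -/
def joinSat {U : Type*} (𝓕 : Set (Set U)) : Set (Set U) :=
  {A | ∃ 𝓐 : Set (Set U), 𝓐 ⊆ 𝓕 ∧ 𝓐.Finite ∧ 𝓐.Nonempty ∧ A = ⋃₀ 𝓐}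

/-- `S(M, F)`: the set of `G ∈ 𝓕` satisfying (sL-1) and (sL-2). -/
def SFam {U : Type*} (R : U → U → Prop) (𝓕 : Set (Set U)) (M F : Set U) : Set (Set U) :=
  {G | G ∈ 𝓕 ∧ upp R M ⊆ upp R G ∧ upp R G ⊆ upp R F ∧
    ∀ G' ∈ 𝓕, upp R M ⊆ upp R G' → upp R G' ⊆ upp R F → upp R G ⊆ upp R G'}

/-- `S*(M, F) = {G ∈ S(M, F) | G ⊆ upp R F}`. -/
def SStar {U : Type*} (R : U → U → Prop) (𝓕 : Set (Set U)) (M F : Set U) : Set (Set U) :=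
  {G | G ∈ SFam R 𝓕 M F ∧ G ⊆ upp R F}

/-- sL-approximation space. -/
def IsSLApprox {U : Type*} (R : U → U → Prop) (𝓕 : Set (Set U)) : Prop :=
  IsCFApprox R 𝓕 ∧
    ∀ M ∈ joinSat 𝓕, ∀ F ∈ 𝓕, M ⊆ upp R F → (SFam R 𝓕 M F).Nonempty

/-- L-approximation space. -/
def IsLApprox {U : Type*} (R : U → U → Prop) (𝓕 : Set (Set U)) : Prop :=
  IsCFApprox R 𝓕 ∧
    ∀ M ∈ joinSat 𝓕 ∪ {(∅ : Set U)}, ∀ F ∈ 𝓕, M ⊆ upp R F → (SFam R 𝓕 M F).Nonempty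

/-- bc-approximation space. -/
def IsBCApprox {U : Type*} (R : U → U → Prop) (𝓕 : Set (Set U)) : Prop :=
  IsCFApprox R 𝓕 ∧
    ∀ M ∈ joinSat 𝓕 ∪ {(∅ : Set U)}, ∀ F ∈ 𝓕, M ⊆ upp R F →
      ∃ G ∈ 𝓕, upp R M ⊆ upp R G ∧ upp R G ⊆ upp R F ∧
        ∀ G' ∈ 𝓕, upp R M ⊆ upp R G' → upp R G ⊆ upp R G'

/-- A dcpo: every (nonempty) directed subset has a supremum. -/
def IsDcpo (P : Type*) [PartialOrder P] : Prop :=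
  ∀ D : Set P, D.Nonempty → DirectedOn (· ≤ ·) D → ∃ s, IsLUB D s

/-- The way-below relation `x ≪ y`. -/
def WayBelow {P : Type*} [PartialOrder P] (x y : P) : Prop :=
  ∀ D : Set P, D.Nonempty → DirectedOn (· ≤ ·) D →
    ∀ s, IsLUB D s → y ≤ s → ∃ d ∈ D, x ≤ d

/-- Continuous domain: a dcpo in which for every `x` the set `{z | z ≪ x}` is
directed with supremum `x`. -/
def IsContinuousDomain (P : Type*) [PartialOrder P] : Prop :=
  IsDcpo P ∧ ∀ x : P, {z | WayBelow z x}.Nonempty ∧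
    DirectedOn (· ≤ ·) {z | WayBelow z x} ∧ IsLUB {z | WayBelow z x} x

/-- Algebraic domain: a dcpo in which for every `x` the set `↓x ∩ K(P)` is
directed with supremum `x`. -/
def IsAlgebraicDomain (P : Type*) [PartialOrder P] : Prop :=
  IsDcpo P ∧ ∀ x : P, ({k | k ≤ x ∧ WayBelow k k}).Nonempty ∧
    DirectedOn (· ≤ ·) {k | k ≤ x ∧ WayBelow k k} ∧
    IsLUB {k | k ≤ x ∧ WayBelow k k} x

/-- sL-domain: a continuous domain in which every principal ideal is a
sup-semilattice. -/
def IsSLDomain (P : Type*) [PartialOrder P] : Prop :=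
  IsContinuousDomain P ∧ ∀ x a b : P, a ≤ x → b ≤ x →
    ∃ s, s ≤ x ∧ a ≤ s ∧ b ≤ s ∧ ∀ t, t ≤ x → a ≤ t → b ≤ t → s ≤ t

/-- L-domain: a continuous domain in which every principal ideal is a
complete lattice (every subset of `↓x` has a least upper bound in `↓x`). -/
def IsLDomain (P : Type*) [PartialOrder P] : Prop :=
  IsContinuousDomain P ∧ ∀ (x : P) (A : Set P), (∀ a ∈ A, a ≤ x) →
    ∃ s, s ≤ x ∧ (∀ a ∈ A, a ≤ s) ∧ ∀ t, t ≤ x → (∀ a ∈ A, a ≤ t) → s ≤ t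

/-- bc-domain: a continuous domain in which every up-bounded subset has a
supremum. -/
def IsBCDomain (P : Type*) [PartialOrder P] : Prop :=
  IsContinuousDomain P ∧ ∀ A : Set P, (∃ b, ∀ a ∈ A, a ≤ b) → ∃ s, IsLUB A s


section Aux

variable {U : Type*} {R : U → U → Prop} {𝓕 : Set (Set U)}

lemma upp_mono {A B : Set U} (h : A ⊆ B) : upp R A ⊆ upp R B :=
  fun x ⟨y, hy, hxy⟩ => ⟨y, h hy, hxy⟩

lemma upp_upp (ht : Transitive R) (A : Set U) : upp R (upp R A) ⊆ upp R A := by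
  rintro x ⟨y, ⟨z, hz, hyz⟩, hxy⟩
  exact ⟨z, hz, ht hxy hyz⟩

lemma cfclosed_upp (hCF : IsCFApprox R 𝓕) {F : Set U} (hF : F ∈ 𝓕) :
    CFClosed R 𝓕 (upp R F) := by
  intro K hKfin hK
  obtain ⟨G, hG, hKG, hGF⟩ := hCF.2.2.2 F hF K hKfin hK
  exact ⟨G, hG, hKG, (upp_mono hGF).trans (upp_upp hCF.1 F), hGF⟩

/-- A finite set contained in a directed union of CF-closed sets lies in one of them. -/
lemma finite_subset_directed {D : Set {E : Set U // CFClosed R 𝓕 E}} (hne : D.Nonempty)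
    (hdir : DirectedOn (· ≤ ·) D) {K : Set U} (hK : K.Finite)
    (hsub : K ⊆ ⋃ d ∈ D, (d : Set U)) : ∃ d ∈ D, K ⊆ (d : Set U) := by
  have hdir' : DirectedOn (fun i j : {E : Set U // CFClosed R 𝓕 E} =>
      (i : Set U) ⊆ (j : Set U)) D := hdir
  have hs : (hK.toFinset : Set U) ⊆ ⋃ d ∈ D, (d : Set U) := by
    rwa [hK.coe_toFinset]
  obtain ⟨d, hd, hKd⟩ := hdir'.exists_mem_subset_of_finset_subset_biUnion hne hs
  rw [hK.coe_toFinset] at hKd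
  exact ⟨d, hd, hKd⟩

lemma cfclosed_dirUnion {D : Set {E : Set U // CFClosed R 𝓕 E}} (hne : D.Nonempty)
    (hdir : DirectedOn (· ≤ ·) D) : CFClosed R 𝓕 (⋃ d ∈ D, (d : Set U)) := by
  intro K hKfin hsub
  obtain ⟨d, hd, hKd⟩ := finite_subset_directed hne hdir hKfin hsub
  obtain ⟨F, hF, h1, h2, h3⟩ := d.2 K hKfin hKd
  exact ⟨F, hF, h1, h2.trans (Set.subset_biUnion_of_mem hd),
    h3.trans (Set.subset_biUnion_of_mem hd)⟩

lemma isLUB_dirUnion {D : Set {E : Set U // CFClosed R 𝓕 E}} (hne : D.Nonempty)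
    (hdir : DirectedOn (· ≤ ·) D) :
    IsLUB D ⟨⋃ d ∈ D, (d : Set U), cfclosed_dirUnion hne hdir⟩ := by
  constructor
  · intro d hd
    exact Set.subset_biUnion_of_mem (u := fun d : {E : Set U // CFClosed R 𝓕 E} => (d : Set U)) hd
  · intro t ht
    show (⋃ d ∈ D, (d : Set U)) ⊆ (t : Set U)
    exact Set.iUnion₂_subset fun d hd => ht hd

lemma isDcpo_cf : IsDcpo {E : Set U // CFClosed R 𝓕 E} := fun D hne hdir =>
  ⟨_, isLUB_dirUnion hne hdir⟩

/-- The canonical basis elements below a CF-closed set `E`. -/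
def BB (R : U → U → Prop) (𝓕 : Set (Set U)) (E : {E : Set U // CFClosed R 𝓕 E}) :
    Set {E : Set U // CFClosed R 𝓕 E} :=
  {d | ∃ F ∈ 𝓕, F ⊆ (E : Set U) ∧ upp R F ⊆ (E : Set U) ∧ (d : Set U) = upp R F}

lemma wayBelow_of_mem_BB (hCF : IsCFApprox R 𝓕) {E d : {E : Set U // CFClosed R 𝓕 E}}
    (hd : d ∈ BB R 𝓕 E) : WayBelow d E := by
  obtain ⟨F, hF, hFE, _hup, hdval⟩ := hd
  intro D hne hdir s hs hEs
  have hsub : (s : Set U) ⊆ ⋃ e ∈ D, (e : Set U) :=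
    hs.2 (isLUB_dirUnion hne hdir).1
  have hFfin : F.Finite := hCF.2.2.1 F hF
  have hFU : F ⊆ ⋃ e ∈ D, (e : Set U) := hFE.trans (Set.Subset.trans hEs hsub)
  obtain ⟨e, he, hFe⟩ := finite_subset_directed hne hdir hFfin hFU
  obtain ⟨G, hG, hFG, hGe, _⟩ := e.2 F hFfin hFe
  refine ⟨e, he, ?_⟩
  show (d : Set U) ⊆ (e : Set U)
  rw [hdval]
  exact ((upp_mono hFG).trans (upp_upp hCF.1 G)).trans hGe

lemma BB_nonempty (hCF : IsCFApprox R 𝓕) (E : {E : Set U // CFClosed R 𝓕 E}) :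
    (BB R 𝓕 E).Nonempty := by
  obtain ⟨F, hF, _, h2, h3⟩ := E.2 ∅ Set.finite_empty (Set.empty_subset _)
  exact ⟨⟨upp R F, cfclosed_upp hCF hF⟩, F, hF, h3, h2, rfl⟩

lemma BB_le {E d : {E : Set U // CFClosed R 𝓕 E}} (hd : d ∈ BB R 𝓕 E) : d ≤ E := by
  obtain ⟨F, _, _, h2, h3⟩ := hd
  show (d : Set U) ⊆ (E : Set U)
  rw [h3]; exact h2

lemma BB_directed (hCF : IsCFApprox R 𝓕) (E : {E : Set U // CFClosed R 𝓕 E}) :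
    DirectedOn (· ≤ ·) (BB R 𝓕 E) := by
  rintro d₁ ⟨F₁, hF₁, hs₁, hu₁, hv₁⟩ d₂ ⟨F₂, hF₂, hs₂, hu₂, hv₂⟩
  have hfin : (F₁ ∪ F₂).Finite := (hCF.2.2.1 F₁ hF₁).union (hCF.2.2.1 F₂ hF₂)
  obtain ⟨G, hG, h1, h2, h3⟩ := E.2 (F₁ ∪ F₂) hfin (Set.union_subset hs₁ hs₂)
  refine ⟨⟨upp R G, cfclosed_upp hCF hG⟩, ⟨G, hG, h3, h2, rfl⟩, ?_, ?_⟩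
  · show (d₁ : Set U) ⊆ upp R G
    rw [hv₁]
    exact (upp_mono ((Set.subset_union_left).trans h1)).trans (upp_upp hCF.1 G)
  · show (d₂ : Set U) ⊆ upp R G
    rw [hv₂]
    exact (upp_mono ((Set.subset_union_right).trans h1)).trans (upp_upp hCF.1 G)

lemma isLUB_BB (hCF : IsCFApprox R 𝓕) (E : {E : Set U // CFClosed R 𝓕 E}) :
    IsLUB (BB R 𝓕 E) E := by
  constructor
  · intro d hd; exact BB_le hd
  · intro t ht
    show (E : Set U) ⊆ (t : Set U)
    intro x hx
    obtain ⟨F, hF, h1, h2, h3⟩ := E.2 {x} (Set.finite_singleton x)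
      (Set.singleton_subset_iff.mpr hx)
    have hmem : (⟨upp R F, cfclosed_upp hCF hF⟩ :
        {E : Set U // CFClosed R 𝓕 E}) ∈ BB R 𝓕 E := ⟨F, hF, h3, h2, rfl⟩
    have := ht hmem
    exact this (h1 rfl)

lemma wayBelow_le {E d : {E : Set U // CFClosed R 𝓕 E}} (hd : WayBelow d E) : d ≤ E := by
  obtain ⟨e, he, hde⟩ := hd {E} ⟨E, rfl⟩
    (directedOn_singleton E) E isLUB_singleton le_rfl
  rw [Set.mem_singleton_iff] at he
  exact he ▸ hde

lemma isContinuous_cf (hCF : IsCFApprox R 𝓕) :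
    IsContinuousDomain {E : Set U // CFClosed R 𝓕 E} := by
  refine ⟨isDcpo_cf, fun E => ?_⟩
  have hBBsub : BB R 𝓕 E ⊆ {z | WayBelow z E} := fun d hd => wayBelow_of_mem_BB hCF hd
  refine ⟨(BB_nonempty hCF E).mono hBBsub, ?_, ?_, ?_⟩
  · -- directedness of the way-below set
    intro z₁ hz₁ z₂ hz₂
    obtain ⟨d₁, hd₁, hzd₁⟩ := hz₁ (BB R 𝓕 E) (BB_nonempty hCF E) (BB_directed hCF E)
      E (isLUB_BB hCF E) le_rfl
    obtain ⟨d₂, hd₂, hzd₂⟩ := hz₂ (BB R 𝓕 E) (BB_nonempty hCF E) (BB_directed hCF E)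
      E (isLUB_BB hCF E) le_rfl
    obtain ⟨d, hd, h₁, h₂⟩ := BB_directed hCF E d₁ hd₁ d₂ hd₂
    exact ⟨d, hBBsub hd, hzd₁.trans h₁, hzd₂.trans h₂⟩
  · exact fun z hz => wayBelow_le hz
  · exact fun t ht => (isLUB_BB hCF E).2 fun d hd => ht (hBBsub hd)

end Aux

/-- if `(U, R, 𝓕)` is a bc-approximation space, then
`(𝔠(U, R, 𝓕), ⊆)` is a bc-domain. -/
theorem stmt17 {U : Type*} (R : U → U → Prop) (𝓕 : Set (Set U))
    (hBC : IsBCApprox R 𝓕) :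
    IsBCDomain {E : Set U // CFClosed R 𝓕 E} := by
  obtain ⟨hCF, hbc⟩ := hBC
  refine ⟨isContinuous_cf hCF, ?_⟩
  rintro A ⟨b, hb⟩
  classical
  -- "Good" finite families of members of `𝓕` sitting inside elements of `A`
  let Good : Set (Set U) → Prop := fun 𝓐 =>
    𝓐.Finite ∧ ∀ F ∈ 𝓐, F ∈ 𝓕 ∧ ∃ a ∈ A, F ⊆ (a : Set U)
  -- existence of a minimal `G` for every good family
  have hex : ∀ 𝓐, Good 𝓐 → ∃ G ∈ 𝓕, upp R (⋃₀ 𝓐) ⊆ upp R G ∧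
      ∀ G' ∈ 𝓕, upp R (⋃₀ 𝓐) ⊆ upp R G' → upp R G ⊆ upp R G' := by
    intro 𝓐 h𝓐
    have hMfin : (⋃₀ 𝓐).Finite :=
      Set.Finite.sUnion h𝓐.1 (fun F hF => hCF.2.2.1 F (h𝓐.2 F hF).1)
    have hMb : ⋃₀ 𝓐 ⊆ (b : Set U) := by
      rintro x ⟨F, hF𝓐, hxF⟩
      obtain ⟨_, a, ha, hFa⟩ := h𝓐.2 F hF𝓐
      exact hb a ha (hFa hxF)
    obtain ⟨F₀, hF₀, hMF₀, _, _⟩ := b.2 (⋃₀ 𝓐) hMfin hMb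
    have hMmem : ⋃₀ 𝓐 ∈ joinSat 𝓕 ∪ {(∅ : Set U)} := by
      rcases eq_or_ne 𝓐 ∅ with h | h
      · right; simp [h]
      · exact Or.inl ⟨𝓐, fun F hF => (h𝓐.2 F hF).1, h𝓐.1,
          Set.nonempty_iff_ne_empty.mpr h, rfl⟩
    obtain ⟨G, hG, h1, _h2, h3⟩ := hbc (⋃₀ 𝓐) hMmem F₀ hF₀ hMF₀
    exact ⟨G, hG, h1, h3⟩
  -- the directed family of minimal approximants
  let D : Set {E : Set U // CFClosed R 𝓕 E} :=
    {d | ∃ 𝓐, Good 𝓐 ∧ ∃ G ∈ 𝓕, (d : Set U) = upp R G ∧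
      upp R (⋃₀ 𝓐) ⊆ upp R G ∧
      ∀ G' ∈ 𝓕, upp R (⋃₀ 𝓐) ⊆ upp R G' → upp R G ⊆ upp R G'}
  have hGood_empty : Good ∅ := ⟨Set.finite_empty, fun F hF => absurd hF (Set.notMem_empty F)⟩
  have hDne : D.Nonempty := by
    obtain ⟨G, hG, h1, h3⟩ := hex ∅ hGood_empty
    exact ⟨⟨upp R G, cfclosed_upp hCF hG⟩, ∅, hGood_empty, G, hG, rfl, h1, h3⟩
  have hDdir : DirectedOn (· ≤ ·) D := by
    rintro d₁ ⟨𝓐₁, h𝓐₁, G₁, hG₁, hv₁, hu₁, hm₁⟩ d₂ ⟨𝓐₂, h𝓐₂, G₂, hG₂, hv₂, hu₂, hm₂⟩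
    have hGood : Good (𝓐₁ ∪ 𝓐₂) :=
      ⟨h𝓐₁.1.union h𝓐₂.1, fun F hF => hF.elim (h𝓐₁.2 F) (h𝓐₂.2 F)⟩
    obtain ⟨G, hG, h1, h3⟩ := hex (𝓐₁ ∪ 𝓐₂) hGood
    refine ⟨⟨upp R G, cfclosed_upp hCF hG⟩, ⟨𝓐₁ ∪ 𝓐₂, hGood, G, hG, rfl, h1, h3⟩, ?_, ?_⟩
    · show (d₁ : Set U) ⊆ upp R G
      rw [hv₁]
      exact hm₁ G hG ((upp_mono (Set.sUnion_mono Set.subset_union_left)).trans h1)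
    · show (d₂ : Set U) ⊆ upp R G
      rw [hv₂]
      exact hm₂ G hG ((upp_mono (Set.sUnion_mono Set.subset_union_right)).trans h1)
  refine ⟨⟨⋃ d ∈ D, (d : Set U), cfclosed_dirUnion hDne hDdir⟩, ?_, ?_⟩
  · -- upper bound of `A`
    intro a ha
    show (a : Set U) ⊆ ⋃ d ∈ D, (d : Set U)
    intro x hx
    obtain ⟨F, hF, h1, _h2, h3⟩ := a.2 {x} (Set.finite_singleton x)
      (Set.singleton_subset_iff.mpr hx)
    have hGood : Good {F} := ⟨Set.finite_singleton F, by
      rintro F' rfl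
      exact ⟨hF, a, ha, h3⟩⟩
    obtain ⟨G, hG, hg1, hg3⟩ := hex {F} hGood
    have hd : (⟨upp R G, cfclosed_upp hCF hG⟩ :
        {E : Set U // CFClosed R 𝓕 E}) ∈ D := ⟨{F}, hGood, G, hG, rfl, hg1, hg3⟩
    have hxG : x ∈ upp R G := by
      apply hg1
      rw [Set.sUnion_singleton]
      exact h1 rfl
    exact Set.mem_biUnion hd hxG
  · -- least among upper bounds
    intro t ht
    show (⋃ d ∈ D, (d : Set U)) ⊆ (t : Set U)
    refine Set.iUnion₂_subset ?_
    rintro d ⟨𝓐, h𝓐, G, hG, hv, _hu, hm⟩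
    have hMfin : (⋃₀ 𝓐).Finite :=
      Set.Finite.sUnion h𝓐.1 (fun F hF => hCF.2.2.1 F (h𝓐.2 F hF).1)
    have hMt : ⋃₀ 𝓐 ⊆ (t : Set U) := by
      rintro x ⟨F, hF𝓐, hxF⟩
      obtain ⟨_, a, ha, hFa⟩ := h𝓐.2 F hF𝓐
      exact ht ha (hFa hxF)
    obtain ⟨F', hF', h1', h2', _⟩ := t.2 (⋃₀ 𝓐) hMfin hMt
    have hGF' : upp R G ⊆ upp R F' :=
      hm F' hF' ((upp_mono h1').trans (upp_upp hCF.1 F'))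
    rw [hv]
    exact hGF'.trans h2'
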